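/- Let H = (V, 𝓔) be a grounded acyclic directed hypergraph and x ∈ V. Define 𝓔_{≤x} as the set of hyperedges E ∈ 𝓔 such that every z ∈ E⁻ satisfies z ≤ x and some y ∈ E⁺ satisfies y ≤ x, let V_{≤x} be the set of all vertices occurring in hyperedges of 𝓔_{≤x}, and let V⁻_{≤x} = {x} ∪ ⋃_{E ∈ 𝓔_{≤x}} E⁻. Then the reachability relation ≤' of the subhypergraph H_≤[x] = (V_{≤x}, 𝓔_{≤x}) coincides with the reachability relation ≤ of H on V⁻_{≤x}: for all u, v ∈ V⁻_{≤x}, u ≤' v if and only if u ≤ v. -/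

import Mathlib

/-- A directed hypergraph on a vertex type `V`: a set of vertices together with a set of
hyperedges, each hyperedge being a pair `(E⁻, E⁺)` of finite sets of vertices
(its tail and head), all of whose vertices belong to the vertex set. -/
structure DirectedHypergraph (V : Type*) where
  verts : Set V
  edges : Set (Finset V × Finset V)
  wf_tail : ∀ E ∈ edges, ∀ v ∈ E.1, v ∈ verts
  wf_head : ∀ E ∈ edges, ∀ v ∈ E.2, v ∈ verts

namespace DirectedHypergraph

variable {V : Type*}

/-- The one-step relation: `x` is in the tail and `y` in the head of a common hyperedge. -/
def OneStep (H : DirectedHypergraph V) (x y : V) : Prop :=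
  ∃ E ∈ H.edges, x ∈ E.1 ∧ y ∈ E.2

/-- Reachability: the reflexive-transitive closure of the one-step relation. -/
def Reach (H : DirectedHypergraph V) : V → V → Prop :=
  Relation.ReflTransGen H.OneStep

/-- Acyclicity: the transitive closure of the one-step relation is irreflexive. -/
def Acyclic (H : DirectedHypergraph V) : Prop :=
  ∀ x : V, ¬ Relation.TransGen H.OneStep x x

/-- A vertex `z` is minimal if `y ≤ z` implies `y = z`. -/
def MinimalVert (H : DirectedHypergraph V) (z : V) : Prop :=
  z ∈ H.verts ∧ ∀ y : V, H.Reach y z → y = z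

/-- `H` is grounded if below every vertex there is a minimal vertex. -/
def Grounded (H : DirectedHypergraph V) : Prop :=
  ∀ x ∈ H.verts, ∃ z : V, H.MinimalVert z ∧ H.Reach z x

/-- `H'` is a subhypergraph of `H`. -/
def Subhypergraph (H' H : DirectedHypergraph V) : Prop :=
  H'.verts ⊆ H.verts ∧ H'.edges ⊆ H.edges

/-- `H` is a B-hypergraph: every head is a singleton. -/
def IsB (H : DirectedHypergraph V) : Prop :=
  ∀ E ∈ H.edges, ∃ y : V, E.2 = {y}

end DirectedHypergraph

namespace DirectedHypergraph

variable {V : Type*}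

/-- The hyperedges all of whose tail vertices reach `x` and at least one of whose head
vertices reaches `x`. -/
def belowEdges (H : DirectedHypergraph V) (x : V) : Set (Finset V × Finset V) :=
  {E ∈ H.edges | (∀ z ∈ E.1, H.Reach z x) ∧ ∃ y ∈ E.2, H.Reach y x}

/-- All vertices occurring in hyperedges of `belowEdges H x`. -/
def belowVerts (H : DirectedHypergraph V) (x : V) : Set V :=
  {v | ∃ E ∈ H.belowEdges x, v ∈ E.1 ∨ v ∈ E.2}

/-- The subhypergraph `H_≤[x] = (V_{≤x}, 𝓔_{≤x})`. -/
def belowHypergraph (H : DirectedHypergraph V) (x : V) : DirectedHypergraph V where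
  verts := H.belowVerts x
  edges := H.belowEdges x
  wf_tail := fun E hE v hv => ⟨E, hE, Or.inl hv⟩
  wf_head := fun E hE v hv => ⟨E, hE, Or.inr hv⟩

end DirectedHypergraph

open DirectedHypergraph in
/-- For a grounded acyclic directed hypergraph `H` and `x ∈ V`, the
reachability relations of `H_≤[x]` and of `H` coincide on
`V⁻_{≤x} = {x} ∪ ⋃_{E ∈ 𝓔_{≤x}} E⁻`. -/
theorem belowHypergraph_reach_coincide {V : Type*} (H : DirectedHypergraph V)
    (hg : H.Grounded) (ha : H.Acyclic) (x : V) (hx : x ∈ H.verts) :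
    ∀ u ∈ insert x {v : V | ∃ E ∈ H.belowEdges x, v ∈ E.1},
      ∀ v ∈ insert x {v : V | ∃ E ∈ H.belowEdges x, v ∈ E.1},
        ((H.belowHypergraph x).Reach u v ↔ H.Reach u v) := by
  have key : ∀ u v : V, H.Reach u v → H.Reach v x → (H.belowHypergraph x).Reach u v := by
    intro u v huv hvx
    induction huv using Relation.ReflTransGen.head_induction_on with
    | refl => exact Relation.ReflTransGen.refl
    | @head a w hstep hrest ih =>
      obtain ⟨E, hE, haE, hwE⟩ := hstep
      have hwx : H.Reach w x := hrest.trans hvx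
      have hEbelow : E ∈ H.belowEdges x := by
        refine ⟨hE, fun z hz => ?_, w, hwE, hwx⟩
        exact Relation.ReflTransGen.head ⟨E, hE, hz, hwE⟩ hwx
      exact Relation.ReflTransGen.head ⟨E, hEbelow, haE, hwE⟩ ih
  intro u hu v hv
  constructor
  · intro h
    exact Relation.ReflTransGen.mono
      (fun a b ⟨E, hE, h1, h2⟩ => ⟨E, hE.1, h1, h2⟩ :
        ∀ a b, (H.belowHypergraph x).OneStep a b → H.OneStep a b) u v h
  · intro h
    have hvx : H.Reach v x := by
      rcases hv with rfl | ⟨E, hE, hvE⟩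
      · exact Relation.ReflTransGen.refl
      · exact hE.2.1 v hvE
    exact key u v h hvx
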